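/- Infinite-horizon additivity: let X = ⊕_{i∈I} X_i with A X_i ⊆ X_i, g : X → ℝ≥0 additive across the decomposition (g(x) = Σ_i g(ρ_i x)), B : U → X linear, E_i = B⁻¹(X_i), and α ∈ (0,1). Suppose a policy π with components π_t ∈ Σ_i E_i for all t is applied from initial state x; write π_t = Σ_i π_{i,t} with π_{i,t} ∈ E_i. Then the resulting state trajectory satisfies ρ_i(x_t) = x_{i,t} for all t, where x_{i,0} = ρ_i(x) and x_{i,t+1} = A x_{i,t} + B π_{i,t}; consequently J(x, π) = Σ_{i∈I} J̄_i(ρ_i x, π_i) (as sums in ℝ≥0∞), where J̄_i is the discounted cost of the i-th subsystem. -/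
import Mathlib


/-- State trajectory driven by a forcing sequence `f`: `x_0 = x`,
`x_{t+1} = A x_t + f t`. -/
def trajF {F X : Type*} [Field F] [AddCommGroup X] [Module F X]
    (A : X →ₗ[F] X) (x : X) (f : ℕ → X) : ℕ → X
  | 0 => x
  | (t + 1) => A (trajF A x f t) + f t

/-- Discounted infinite-horizon cost of a forced trajectory, taken in `ℝ≥0∞`. -/
noncomputable def JinfF {F X : Type*} [Field F] [AddCommGroup X] [Module F X]
    (g : X → ℝ) (α : ℝ) (A : X →ₗ[F] X) (x : X) (f : ℕ → X) : ENNReal :=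
  ∑' t : ℕ, ENNReal.ofReal (α ^ t * g (trajF A x f t))

/-- if the policy decomposes as `π_t = Σ_i π_{i,t}` with
`π_{i,t} ∈ E_i`, then the trajectory projects onto the subsystem trajectories
(`ρ_i x_t = x_{i,t}`), and the discounted cost splits as the sum of the
subsystem discounted costs. -/
theorem discounted_cost_additive_of_split_policy
    {F U X : Type*} [Field F] [AddCommGroup U] [Module F U]
    [AddCommGroup X] [Module F X] {ι : Type*} [Fintype ι] [DecidableEq ι]
    (A : X →ₗ[F] X) (B : U →ₗ[F] X)
    (Xs : ι → Submodule F X) (hXs : DirectSum.IsInternal Xs)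
    (hA : ∀ i, ∀ x ∈ Xs i, A x ∈ Xs i)
    (ρ : ι → X →ₗ[F] X)
    (hρmem : ∀ i x, ρ i x ∈ Xs i)
    (hρsum : ∀ x, ∑ i, ρ i x = x)
    (hρproj : ∀ i j, ∀ x ∈ Xs j, ρ i x = if i = j then x else 0)
    (g : X → ℝ) (hgnn : ∀ x, 0 ≤ g x) (hg0 : g 0 = 0)
    (hgadd : ∀ x, g x = ∑ i, g (ρ i x))
    (Es : ι → Submodule F U) (hEs : ∀ i, Es i = Submodule.comap B (Xs i))
    (α : ℝ) (hα : α ∈ Set.Ioo (0 : ℝ) 1)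
    (x : X) (π : ℕ → U) (πi : ι → ℕ → U)
    (hπmem : ∀ i t, πi i t ∈ Es i)
    (hπsum : ∀ t, π t = ∑ i, πi i t) :
    (∀ i t, ρ i (trajF A x (fun s => B (π s)) t) =
        trajF A (ρ i x) (fun s => B (πi i s)) t) ∧
    JinfF g α A x (fun s => B (π s)) =
      ∑ i, JinfF g α A (ρ i x) (fun s => B (πi i s)) := by
  -- ρ i commutes with A
  have hρA : ∀ i y, ρ i (A y) = A (ρ i y) := by
    intro i y
    conv_lhs => rw [← hρsum y, map_sum, map_sum]
    rw [Finset.sum_eq_single i]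
    · rw [hρproj i i _ (hA i _ (hρmem i y)), if_pos rfl]
    · intro j _ hj
      rw [hρproj i j _ (hA j _ (hρmem j y)), if_neg (Ne.symm hj)]
    · intro h; exact absurd (Finset.mem_univ i) h
  have hρB : ∀ i t, ρ i (B (π t)) = B (πi i t) := by
    intro i t
    rw [hπsum t, map_sum, map_sum]
    rw [Finset.sum_eq_single i]
    · have := hπmem i t; rw [hEs i] at this
      rw [hρproj i i _ this, if_pos rfl]
    · intro j _ hj
      have := hπmem j t; rw [hEs j] at this
      rw [hρproj i j _ this, if_neg (Ne.symm hj)]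
    · intro h; exact absurd (Finset.mem_univ i) h
  have htraj : ∀ i t, ρ i (trajF A x (fun s => B (π s)) t) =
      trajF A (ρ i x) (fun s => B (πi i s)) t := by
    intro i t
    induction t with
    | zero => rfl
    | succ t ih =>
      simp only [trajF, map_add, hρA, ih, hρB]
  refine ⟨htraj, ?_⟩
  unfold JinfF
  rw [← Summable.tsum_finsetSum fun i _ => ENNReal.summable]
  congr 1; funext t
  rw [hgadd (trajF A x (fun s => B (π s)) t), Finset.mul_sum,
    ENNReal.ofReal_sum_of_nonneg]
  · congr 1; funext i; rw [htraj i t]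
  · intro i _
    exact mul_nonneg (pow_nonneg hα.1.le t) (hgnn _)
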